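/- arXiv:0704.2805 — 2 statements merged into one kernel-verified Lean document; each statement's English description precedes it below -/
import Mathlib

section
/- There is an absolute constant C > 0 with the following property. Let a and q ≥ 1 be integers with gcd(a,q) = 1, let n, k, L be positive integers and N ≥ 1 a real number satisfying L ≤ N^n, q ≤ L·N^k and 2^{n+k+1} < N, and let 𝒫 be the set of prime numbers p with N/2 ≤ p ≤ N and p ∤ q. Suppose m is a positive integer with m ≤ n and r₁, …, r_m are positive integers with r₁ + … + r_m = n. Then ∑_{l=1}^{L} | ∑_{q₁ ∈ 𝒫} … ∑_{q_m ∈ 𝒫} e(l·q₁^{r₁}⋯q_m^{r_m}·a/q) | ≤ C · 2^{n+k} · n^n · max( L·N^{n/2 + k/2}, L·N^n/q^{1/2} ). -/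
open Finset

/-- e(x) = e^{2πix}. -/
noncomputable def e (x : ℝ) : ℂ := Complex.exp (2 * Real.pi * Complex.I * x)


lemma e_norm (x : ℝ) : ‖e x‖ = 1 := by
  rw [e, Complex.norm_exp]
  have : (2 * ↑Real.pi * Complex.I * ↑x).re = 0 := by simp
  rw [this, Real.exp_zero]

lemma e_int (j : ℤ) : e j = 1 := by
  rw [e, show (2 * ↑Real.pi * Complex.I * (j:ℝ) : ℂ) = j * (2 * ↑Real.pi * Complex.I) by
    push_cast; ring, Complex.exp_int_mul_two_pi_mul_I]

lemma e_add_int (x : ℝ) (j : ℤ) : e (x + j) = e x := by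
  rw [e, e, Complex.ofReal_add, mul_add, Complex.exp_add]
  have : Complex.exp (2 * ↑Real.pi * Complex.I * ((j:ℤ):ℝ)) = 1 := e_int j
  rw [this, mul_one]

lemma e_mul_conj (x y : ℝ) : e x * (starRingEnd ℂ) (e y) = e (x - y) := by
  rw [e, e, e, ← Complex.exp_conj, ← Complex.exp_add]
  congr 1
  rw [show (starRingEnd ℂ) (2 * ↑Real.pi * Complex.I * ↑y)
      = 2 * ↑Real.pi * (-Complex.I) * ↑y by
    simp [Complex.ext_iff]]
  push_cast
  ring
lemma e_orth_dvd (Q : ℕ) (hQ : 0 < Q) (D : ℤ) (h : (Q:ℤ) ∣ D) :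
    ∑ c ∈ range Q, e ((c:ℝ) * (D:ℝ) / (Q:ℝ)) = (Q:ℂ) := by
  obtain ⟨s, rfl⟩ := h
  have hQ0 : (Q:ℝ) ≠ 0 := Nat.cast_ne_zero.mpr hQ.ne'
  have : ∀ c ∈ range Q, e ((c:ℝ) * (((Q:ℤ)*s : ℤ):ℝ) / (Q:ℝ)) = 1 := by
    intro c _
    have : ((c:ℝ) * (((Q:ℤ)*s : ℤ):ℝ) / (Q:ℝ)) = (((c * s : ℤ)):ℝ) := by
      push_cast; field_simp
    rw [this, e_int]
  rw [Finset.sum_congr rfl this, Finset.sum_const, Finset.card_range]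
  simp

lemma e_orth_not (Q : ℕ) (hQ : 0 < Q) (D : ℤ) (h : ¬ (Q:ℤ) ∣ D) :
    ∑ c ∈ range Q, e ((c:ℝ) * (D:ℝ) / (Q:ℝ)) = 0 := by
  have hQ0 : (Q:ℝ) ≠ 0 := Nat.cast_ne_zero.mpr hQ.ne'
  have hQC : ((Q:ℕ):ℂ) ≠ 0 := Nat.cast_ne_zero.mpr hQ.ne'
  have hterm : ∀ c ∈ range Q, e ((c:ℝ) * (D:ℝ) / (Q:ℝ)) = (e ((D:ℝ) / (Q:ℝ)))^c := by
    intro c _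
    rw [e, e, ← Complex.exp_nat_mul]
    congr 1
    push_cast
    ring
  rw [Finset.sum_congr rfl hterm]
  have hζ1 : e ((D:ℝ)/(Q:ℝ)) ≠ 1 := by
    intro hone
    rw [e, Complex.exp_eq_one_iff] at hone
    obtain ⟨nn, hn⟩ := hone
    have hne : (2 * ↑Real.pi * Complex.I : ℂ) ≠ 0 := by
      simp [Real.pi_ne_zero, Complex.I_ne_zero]
    have hc : (2 * ↑Real.pi * Complex.I : ℂ) * (((D:ℝ)/(Q:ℝ) : ℝ) : ℂ)
        = (2 * ↑Real.pi * Complex.I : ℂ) * (nn:ℂ) := by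
      rw [show (2 * ↑Real.pi * Complex.I : ℂ) * (((D:ℝ)/(Q:ℝ) : ℝ) : ℂ)
        = 2 * ↑Real.pi * Complex.I * (((D:ℝ)/(Q:ℝ) : ℝ) : ℂ) from by ring, hn]
      ring
    have hx : (((D:ℝ)/(Q:ℝ) : ℝ) : ℂ) = (nn:ℂ) := mul_left_cancel₀ hne hc
    have hx2 : (D:ℝ)/(Q:ℝ) = (nn:ℝ) := by exact_mod_cast hx
    have hx3 : (D:ℝ) = (nn:ℝ) * (Q:ℝ) := by
      field_simp at hx2; linarith [hx2]
    have hx4 : D = nn * (Q:ℤ) := by exact_mod_cast hx3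
    exact h ⟨nn, by linarith [hx4]⟩
  rw [geom_sum_eq hζ1]
  have hQpow : (e ((D:ℝ)/(Q:ℝ)))^Q = 1 := by
    rw [e, ← Complex.exp_nat_mul,
      show ((Q:ℕ):ℂ) * (2 * ↑Real.pi * Complex.I * ((D:ℝ)/(Q:ℝ) : ℝ)) =
        2 * ↑Real.pi * Complex.I * ((D:ℤ):ℝ) by push_cast; field_simp]
    exact e_int D
  rw [hQpow]
  simp

lemma count_mod_le (X Q c : ℕ) (hQ : 0 < Q) :
    ((Finset.Icc 1 X).filter (fun x => x % Q = c)).card ≤ X / Q + 1 := by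
  have h := Finset.card_le_card_of_injOn (fun x => x / Q)
    (s := (Finset.Icc 1 X).filter (fun x => x % Q = c)) (t := Finset.range (X/Q+1))
    (by
      intro x hx
      simp only [Finset.mem_coe, Finset.mem_filter, Finset.mem_Icc] at hx
      simp only [Finset.mem_coe, Finset.mem_range, Nat.lt_succ_iff]
      exact Nat.div_le_div_right hx.1.2)
    (by
      intro x hx y hy hxy
      simp only [Finset.coe_filter, Finset.mem_Icc, Set.mem_setOf_eq] at hx hy
      have ex : x = Q * (x / Q) + x % Q := (Nat.div_add_mod x Q).symm
      have ey : y = Q * (y / Q) + y % Q := (Nat.div_add_mod y Q).symm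
      have hxy' : x / Q = y / Q := hxy
      rw [ex, ey, hxy', hx.2, hy.2])
  simpa using h

lemma sum_le_of_fiber_le {α β : Type*} [DecidableEq β] (s : Finset α) (t : Finset β)
    (f : α → β) (h : β → ℝ) (h0 : ∀ b, 0 ≤ h b) (hmap : ∀ a ∈ s, f a ∈ t) (K : ℕ)
    (hfib : ∀ b ∈ t, (s.filter (fun a => f a = b)).card ≤ K) :
    ∑ a ∈ s, h (f a) ≤ (K : ℝ) * ∑ b ∈ t, h b := by
  rw [← Finset.sum_fiberwise_of_maps_to hmap (fun a => h (f a)), Finset.mul_sum]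
  apply Finset.sum_le_sum
  intro b hb
  have : ∑ a ∈ s.filter (fun a => f a = b), h (f a)
      = (s.filter (fun a => f a = b)).card * h b := by
    rw [Finset.sum_congr rfl (fun a ha => by rw [(Finset.mem_filter.mp ha).2]),
      Finset.sum_const, nsmul_eq_mul]
  rw [this]
  exact mul_le_mul_of_nonneg_right (by exact_mod_cast hfib b hb) (h0 b)

lemma dcount (N : ℝ) (n k : ℕ) (P : Finset ℕ)
    (hN2 : (2:ℝ)^(n+k+1) < N)
    (hPp : ∀ p ∈ P, p.Prime ∧ N/2 ≤ (p:ℝ))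
    (x : ℕ) (hx1 : 1 ≤ x) (hx : (x:ℝ) ≤ N^(n+k)) :
    (P.filter (· ∣ x)).card ≤ n + k := by
  by_contra hlt
  push_neg at hlt
  set s := P.filter (· ∣ x) with hs
  have hdvd : ∏ p ∈ s, p ∣ x := Finset.prod_primes_dvd x
    (fun p hp => (hPp p (Finset.mem_of_mem_filter p hp)).1.prime)
    (fun p hp => (Finset.mem_filter.mp hp).2)
  have hprod_le : ((∏ p ∈ s, p : ℕ):ℝ) ≤ x := Nat.cast_le.mpr (Nat.le_of_dvd hx1 hdvd)
  have h2pos : (0:ℝ) < 2^(n+k) := by positivity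
  have hN2' : (2:ℝ)^(n+k) < N/2 := by
    rw [pow_succ] at hN2; linarith
  have hhalf : (1:ℝ) < N/2 := by
    have : (1:ℝ) ≤ 2^(n+k) := one_le_pow₀ (by norm_num)
    linarith
  have hlow : (N/2)^s.card ≤ ((∏ p ∈ s, p : ℕ):ℝ) := by
    rw [Nat.cast_prod, ← Finset.prod_const]
    exact Finset.prod_le_prod (fun p _ => by linarith)
      (fun p hp => (hPp p (Finset.mem_of_mem_filter p hp)).2)
  have hupp : N^(n+k) < (N/2)^(n+k+1) := by
    have hsplit : N^(n+k) = (N/2)^(n+k) * 2^(n+k) := by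
      rw [← mul_pow]; norm_num
    rw [hsplit, pow_succ]
    exact mul_lt_mul_of_pos_left hN2' (by positivity)
  have hmono : (N/2)^(n+k+1) ≤ (N/2)^s.card := pow_le_pow_right₀ hhalf.le hlt
  linarith

lemma card_piFinset_ite (m : ℕ) (I : Finset (Fin m)) (s t : Finset ℕ) :
    (Fintype.piFinset (fun i : Fin m => if i ∈ I then s else t)).card
      = s.card ^ I.card * t.card ^ (m - I.card) := by
  rw [Fintype.card_piFinset]
  have : ∀ i : Fin m, (if i ∈ I then s else t).card = if i ∈ I then s.card else t.card := by
    intro i; split_ifs <;> rfl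
  rw [Finset.prod_congr rfl (fun i _ => this i), Finset.prod_ite (fun _ => s.card) (fun _ => t.card),
    Finset.prod_const, Finset.prod_const, Finset.filter_univ_mem]
  congr 2
  have h := Finset.card_filter_add_card_filter_not (s := (univ : Finset (Fin m)))
    (fun i => i ∈ I)
  rw [Finset.filter_univ_mem, Finset.card_univ, Fintype.card_fin] at h
  omega

lemma sum_split {m : ℕ} (P : Finset ℕ) (I : Finset (Fin m)) (F : (Fin m → ℕ) → ℂ) :
    ∑ t ∈ Fintype.piFinset (fun _ : Fin m => P), F t =
    ∑ u ∈ Fintype.piFinset (fun i : Fin m => if i ∈ I then P else {1}),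
      ∑ v ∈ Fintype.piFinset (fun i : Fin m => if i ∈ I then ({1} : Finset ℕ) else P),
        F (u * v) := by
  rw [← Finset.sum_product' _ _ (fun u v => F (u * v))]
  apply Finset.sum_nbij'
    (i := fun t => ((fun i => if i ∈ I then t i else 1), (fun i => if i ∈ I then 1 else t i)))
    (j := fun p => p.1 * p.2)
  · intro t ht
    rw [Fintype.mem_piFinset] at ht
    rw [Finset.mem_product, Fintype.mem_piFinset, Fintype.mem_piFinset]
    constructor <;> intro i <;> by_cases hi : i ∈ I <;> simp [hi, ht i]
  · intro p hp
    rw [Finset.mem_product, Fintype.mem_piFinset, Fintype.mem_piFinset] at hp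
    rw [Fintype.mem_piFinset]
    intro i
    have h1 := hp.1 i
    have h2 := hp.2 i
    by_cases hi : i ∈ I <;> simp [hi] at h1 h2 <;> simp [Pi.mul_apply, h1, h2]
  · intro t ht
    funext i
    by_cases hi : i ∈ I <;> simp [Pi.mul_apply, hi]
  · intro p hp
    rw [Finset.mem_product, Fintype.mem_piFinset, Fintype.mem_piFinset] at hp
    obtain ⟨p1, p2⟩ := p
    simp only [Prod.mk.injEq]
    constructor <;> funext i <;> by_cases hi : i ∈ I <;>
      [skip; skip; skip; skip] <;>
      first
      | (have h1 := hp.1 i; have h2 := hp.2 i; simp [hi] at h1 h2 ⊢;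
         simp [Pi.mul_apply, h1, h2])
  · intro t ht
    congr 1
    funext i
    by_cases hi : i ∈ I <;> simp [Pi.mul_apply, hi]
set_option maxHeartbeats 2000000 in
theorem stmt_6 :
    ∃ C : ℝ, 0 < C ∧
      ∀ (a q : ℤ) (n k L : ℕ) (N : ℝ) (P : Finset ℕ) (m : ℕ) (r : Fin m → ℕ),
        1 ≤ q → Int.gcd a q = 1 → 0 < n → 0 < k → 0 < L →
        1 ≤ N → (L : ℝ) ≤ N ^ (n : ℕ) → (q : ℝ) ≤ (L : ℝ) * N ^ (k : ℕ) →
        (2 : ℝ) ^ (n + k + 1) < N →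
        (∀ p : ℕ, p ∈ P ↔ p.Prime ∧ N / 2 ≤ (p : ℝ) ∧ (p : ℝ) ≤ N ∧ ¬((p : ℤ) ∣ q)) →
        0 < m → m ≤ n → (∀ i, 0 < r i) → (∑ i, r i) = n →
        ∑ l ∈ Finset.Icc 1 L,
            ‖∑ t ∈ Fintype.piFinset (fun _ : Fin m => P),
                e ((l : ℝ) * (∏ i, (t i : ℝ) ^ (r i)) * (a : ℝ) / (q : ℝ))‖ ≤
          C * 2 ^ (n + k) * (n : ℝ) ^ (n : ℕ) *
            max ((L : ℝ) * N ^ ((n : ℝ) / 2 + (k : ℝ) / 2))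
              ((L : ℝ) * N ^ (n : ℕ) / Real.sqrt (q : ℝ)) := by
  refine ⟨4, by norm_num, ?_⟩
  intro a q n k L N P m r hq hgcd hn hk hL hN1 hLN hqLN hN2 hP hm hmn hr hrsum
  classical
  have hq0 : (0:ℤ) < q := by linarith
  set Q : ℕ := q.toNat with hQdef
  have hQ1 : 1 ≤ Q := by omega
  have hQpos : 0 < Q := hQ1
  have hQZ : ((Q:ℕ):ℤ) = q := Int.toNat_of_nonneg (by linarith)
  have hQR : ((Q:ℕ):ℝ) = (q:ℝ) := by exact_mod_cast congrArg (Int.cast : ℤ → ℝ) hQZ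
  have hqR : (0:ℝ) < (q:ℝ) := by exact_mod_cast hq0
  have hN0 : (0:ℝ) < N := by linarith
  set Nf : ℕ := ⌊N⌋₊ with hNfdef
  have hNfle : (Nf:ℝ) ≤ N := Nat.floor_le (by linarith)
  have hPmem : ∀ p ∈ P, p.Prime ∧ N/2 ≤ (p:ℝ) := fun p hp => ⟨((hP p).1 hp).1, ((hP p).1 hp).2.1⟩
  have hPNf : ∀ p ∈ P, p ≤ Nf := fun p hp => Nat.le_floor ((hP p).1 hp).2.2.1
  have hcardP : P.card ≤ Nf := by
    have hsub : P ⊆ Finset.Icc 1 Nf :=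
      fun p hp => Finset.mem_Icc.mpr ⟨(hPmem p hp).1.pos, hPNf p hp⟩
    have := Finset.card_le_card hsub
    rwa [Nat.card_Icc, Nat.add_sub_cancel] at this
  have hpCN : ((P.card : ℕ):ℝ) ≤ N := le_trans (Nat.cast_le.mpr hcardP) hNfle
  have hn1R : (1:ℝ) ≤ (n:ℝ)^n := one_le_pow₀ (by exact_mod_cast hn)
  have h2nk1 : (1:ℝ) ≤ 2^(n+k) := one_le_pow₀ (by norm_num)
  have hMx0 : (0:ℝ) ≤ max ((L : ℝ) * N ^ ((n : ℝ) / 2 + (k : ℝ) / 2))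
      ((L : ℝ) * N ^ (n : ℕ) / Real.sqrt (q : ℝ)) :=
    le_trans (by positivity) (le_max_left _ _)
  rcases le_or_gt (2*m) (n+k) with hc | hc
  · -- trivial case
    have hbd : ∑ l ∈ Finset.Icc 1 L,
        ‖∑ t ∈ Fintype.piFinset (fun _ : Fin m => P),
            e ((l : ℝ) * (∏ i, (t i : ℝ) ^ (r i)) * (a : ℝ) / (q : ℝ))‖
        ≤ (L:ℝ) * ((P.card : ℕ):ℝ)^m := by
      calc ∑ l ∈ Finset.Icc 1 L, ‖∑ t ∈ Fintype.piFinset (fun _ : Fin m => P),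
              e ((l : ℝ) * (∏ i, (t i : ℝ) ^ (r i)) * (a : ℝ) / (q : ℝ))‖
          ≤ ∑ l ∈ Finset.Icc 1 L, ((P.card : ℕ):ℝ)^m := by
            apply Finset.sum_le_sum
            intro l _
            calc ‖∑ t ∈ Fintype.piFinset (fun _ : Fin m => P),
                  e ((l : ℝ) * (∏ i, (t i : ℝ) ^ (r i)) * (a : ℝ) / (q : ℝ))‖
                ≤ ∑ t ∈ Fintype.piFinset (fun _ : Fin m => P), ‖e ((l : ℝ) * (∏ i, (t i : ℝ) ^ (r i)) * (a : ℝ) / (q : ℝ))‖ :=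
                  norm_sum_le _ _
              _ = ∑ t ∈ Fintype.piFinset (fun _ : Fin m => P), 1 := by
                  apply Finset.sum_congr rfl; intro t _; exact e_norm _
              _ = ((P.card : ℕ):ℝ)^m := by
                  rw [Finset.sum_const, Fintype.card_piFinset]
                  simp
        _ = (L:ℝ) * ((P.card : ℕ):ℝ)^m := by
            rw [Finset.sum_const, Nat.card_Icc, Nat.add_sub_cancel, nsmul_eq_mul]
    refine le_trans hbd ?_
    have h1 : (L:ℝ) * ((P.card : ℕ):ℝ)^m ≤ (L:ℝ) * N ^ ((n : ℝ) / 2 + (k : ℝ) / 2) := by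
      apply mul_le_mul_of_nonneg_left _ (Nat.cast_nonneg L)
      calc ((P.card : ℕ):ℝ)^m ≤ N^m := pow_le_pow_left₀ (Nat.cast_nonneg _) hpCN m
        _ = N ^ ((m:ℕ):ℝ) := (Real.rpow_natCast N m).symm
        _ ≤ N ^ ((n:ℝ)/2 + (k:ℝ)/2) := by
            apply Real.rpow_le_rpow_of_exponent_le hN1
            have h2 : 2*(m:ℝ) ≤ (n:ℝ)+(k:ℝ) := by exact_mod_cast hc
            push_cast
            linarith
    refine le_trans h1 ?_
    calc (L:ℝ) * N ^ ((n : ℝ) / 2 + (k : ℝ) / 2)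
        ≤ max ((L : ℝ) * N ^ ((n : ℝ) / 2 + (k : ℝ) / 2))
            ((L : ℝ) * N ^ (n : ℕ) / Real.sqrt (q : ℝ)) := le_max_left _ _
      _ ≤ 4 * 2 ^ (n + k) * (n : ℝ) ^ (n : ℕ) * _ := by
          apply le_mul_of_one_le_left hMx0
          nlinarith
  · -- main case
    have hkm : k < m := by omega
    have hkn : k < n := by omega
    -- choose I : k indices with r i = 1
    have hs0card : k ≤ ((univ : Finset (Fin m)).filter (fun i => r i = 1)).card := by
      have h1 : ∑ i ∈ (univ : Finset (Fin m)).filter (fun i => r i = 1), r i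
          = ((univ : Finset (Fin m)).filter (fun i => r i = 1)).card := by
        rw [Finset.sum_congr rfl (fun i hi => (Finset.mem_filter.mp hi).2),
          Finset.sum_const, smul_eq_mul, mul_one]
      have h2 : 2 * ((univ : Finset (Fin m)).filter (fun i => ¬ r i = 1)).card
          ≤ ∑ i ∈ (univ : Finset (Fin m)).filter (fun i => ¬ r i = 1), r i := by
        have hge := Finset.card_nsmul_le_sum ((univ : Finset (Fin m)).filter (fun i => ¬ r i = 1)) r 2
          (fun i hi => by have := hr i; have := (Finset.mem_filter.mp hi).2; omega)
        simpa [smul_eq_mul, mul_comm] using hge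
      have h3 := Finset.sum_filter_add_sum_filter_not (univ : Finset (Fin m)) (fun i => r i = 1) r
      have h4 := Finset.card_filter_add_card_filter_not (s := (univ : Finset (Fin m)))
        (fun i => r i = 1)
      rw [Finset.card_univ, Fintype.card_fin] at h4
      rw [hrsum] at h3
      omega
    obtain ⟨I, hIsub, hIcard⟩ := Finset.exists_subset_card_eq hs0card
    have hrI : ∀ i ∈ I, r i = 1 := fun i hi => (Finset.mem_filter.mp (hIsub hi)).2
    have hsumI : ∑ i ∈ I, r i = k := by
      rw [Finset.sum_congr rfl hrI, Finset.sum_const, smul_eq_mul, mul_one, hIcard]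
    have hsumIc : ∑ i ∈ Iᶜ, r i = n - k := by
      have h5 := Finset.sum_add_sum_compl I r
      rw [hrsum, hsumI] at h5
      omega
    set U := Fintype.piFinset (fun i : Fin m => if i ∈ I then P else {1}) with hUdef
    set V := Fintype.piFinset (fun i : Fin m => if i ∈ I then ({1}:Finset ℕ) else P) with hVdef
    set Pf : (Fin m → ℕ) → ℕ := fun t => ∏ i, t i ^ r i with hPfdef
    set X := L * Nf ^ k with hXdef
    set Y := Nf ^ (n - k) with hYdef
    -- membership consequences
    have hUmem : ∀ u ∈ U, (∀ i, i ∈ I → u i ∈ P) ∧ (∀ i, i ∉ I → u i = 1) := by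
      intro u hu
      rw [hUdef, Fintype.mem_piFinset] at hu
      constructor <;> intro i hi <;> have := hu i <;> simp [hi] at this <;> simp [this]
    have hVmem : ∀ v ∈ V, (∀ i, i ∈ I → v i = 1) ∧ (∀ i, i ∉ I → v i ∈ P) := by
      intro v hv
      rw [hVdef, Fintype.mem_piFinset] at hv
      constructor <;> intro i hi <;> have := hv i <;> simp [hi] at this <;> simp [this]
    have hPfU : ∀ u ∈ U, 1 ≤ Pf u ∧ Pf u ≤ Nf ^ k := by
      intro u hu
      have hpos : ∀ i, 0 < u i := by
        intro i
        by_cases hi : i ∈ I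
        · exact (hPmem _ ((hUmem u hu).1 i hi)).1.pos
        · rw [(hUmem u hu).2 i hi]; norm_num
      constructor
      · exact Finset.one_le_prod' (fun i _ => Nat.one_le_pow _ _ (hpos i))
      · calc Pf u ≤ ∏ i, (if i ∈ I then Nf ^ r i else 1) := by
              apply Finset.prod_le_prod'
              intro i _
              by_cases hi : i ∈ I
              · simp only [hi, if_true]
                exact Nat.pow_le_pow_left (hPNf _ ((hUmem u hu).1 i hi)) _
              · simp only [hi, if_false, (hUmem u hu).2 i hi, one_pow, le_refl]
          _ = Nf ^ k := by
              rw [Finset.prod_ite_mem univ I (fun i => Nf ^ r i), Finset.univ_inter,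
                Finset.prod_pow_eq_pow_sum, hsumI]
    have hPfV : ∀ v ∈ V, 1 ≤ Pf v ∧ Pf v ≤ Nf ^ (n - k) := by
      intro v hv
      have hpos : ∀ i, 0 < v i := by
        intro i
        by_cases hi : i ∈ I
        · rw [(hVmem v hv).1 i hi]; norm_num
        · exact (hPmem _ ((hVmem v hv).2 i hi)).1.pos
      constructor
      · exact Finset.one_le_prod' (fun i _ => Nat.one_le_pow _ _ (hpos i))
      · calc Pf v ≤ ∏ i, (if i ∈ Iᶜ then Nf ^ r i else 1) := by
              apply Finset.prod_le_prod'
              intro i _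
              by_cases hi : i ∈ I
              · simp only [Finset.mem_compl, hi, not_true, if_false,
                  (hVmem v hv).1 i hi, one_pow, le_refl]
              · simp only [Finset.mem_compl, hi, not_false_iff, if_true]
                exact Nat.pow_le_pow_left (hPNf _ ((hVmem v hv).2 i hi)) _
          _ = Nf ^ (n-k) := by
              rw [Finset.prod_ite_mem univ Iᶜ (fun i => Nf ^ r i), Finset.univ_inter,
                Finset.prod_pow_eq_pow_sum, hsumIc]
    have hPfmul : ∀ u v : Fin m → ℕ, Pf (u * v) = Pf u * Pf v := by
      intro u v
      rw [hPfdef]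
      simp only [Pi.mul_apply, mul_pow]
      exact Finset.prod_mul_distrib
    set gC : ℕ → ℂ := fun x => ∑ v ∈ V, e ((x:ℝ) * ((Pf v : ℕ):ℝ) * (a:ℝ) / (q:ℝ)) with hgCdef
    set G : ℕ → ℝ := fun x => ‖gC x‖ with hGdef
    have hG0 : ∀ x, 0 ≤ G x := fun x => norm_nonneg _
    -- Step 1
    have step1 : ∑ l ∈ Finset.Icc 1 L,
        ‖∑ t ∈ Fintype.piFinset (fun _ : Fin m => P),
            e ((l : ℝ) * (∏ i, (t i : ℝ) ^ (r i)) * (a : ℝ) / (q : ℝ))‖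
        ≤ ∑ p ∈ Finset.Icc 1 L ×ˢ U, G (p.1 * Pf p.2) := by
      rw [Finset.sum_product]
      apply Finset.sum_le_sum
      intro l _
      have hrw : ∀ t : Fin m → ℕ, ((l : ℝ) * (∏ i, (t i : ℝ) ^ (r i)) * (a : ℝ) / (q : ℝ))
          = ((l : ℝ) * ((Pf t : ℕ):ℝ) * (a : ℝ) / (q : ℝ)) := by
        intro t
        rw [hPfdef]
        push_cast
        ring
      have e1 : ∑ t ∈ Fintype.piFinset (fun _ : Fin m => P),
            e ((l : ℝ) * (∏ i, (t i : ℝ) ^ (r i)) * (a : ℝ) / (q : ℝ))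
          = ∑ u ∈ U, ∑ v ∈ V, e ((((l * Pf u : ℕ)):ℝ) * ((Pf v : ℕ):ℝ) * (a : ℝ) / (q : ℝ)) := by
        rw [Finset.sum_congr rfl (fun t _ => by rw [hrw t]),
          sum_split P I (fun t => e ((l : ℝ) * ((Pf t : ℕ):ℝ) * (a : ℝ) / (q : ℝ)))]
        apply Finset.sum_congr rfl
        intro u _
        apply Finset.sum_congr rfl
        intro v _
        congr 1
        rw [hPfmul u v]
        push_cast
        ring
      rw [e1]
      exact norm_sum_le _ _

    -- Step 2 (Cauchy–Schwarz)
    have step2 : (∑ p ∈ Finset.Icc 1 L ×ˢ U, G (p.1 * Pf p.2))^2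
        ≤ ((L * P.card ^ k : ℕ):ℝ) * ∑ p ∈ Finset.Icc 1 L ×ˢ U, (G (p.1 * Pf p.2))^2 := by
      have hcs := Finset.sum_mul_sq_le_sq_mul_sq (Finset.Icc 1 L ×ˢ U)
        (fun _ => (1:ℝ)) (fun p => G (p.1 * Pf p.2))
      simp only [one_mul, one_pow] at hcs
      have hcard : ∑ _p ∈ Finset.Icc 1 L ×ˢ U, (1:ℝ) = ((L * P.card ^ k : ℕ):ℝ) := by
        rw [Finset.sum_const, Finset.card_product, Nat.card_Icc, Nat.add_sub_cancel,
          hUdef, card_piFinset_ite, hIcard]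
        simp
      rw [hcard] at hcs
      exact hcs
    -- Step 3 (fibers of (l,u) ↦ l * Pf u)
    have step3 : ∑ p ∈ Finset.Icc 1 L ×ˢ U, (G (p.1 * Pf p.2))^2
        ≤ (((n+k)^k : ℕ):ℝ) * ∑ x ∈ Finset.Icc 1 X, (G x)^2 := by
      apply sum_le_of_fiber_le (Finset.Icc 1 L ×ˢ U) (Finset.Icc 1 X)
        (fun p => p.1 * Pf p.2) (fun x => (G x)^2) (fun x => by positivity)
      · intro p hp
        rw [Finset.mem_product] at hp
        have h1 := hPfU p.2 hp.2
        have hl := Finset.mem_Icc.mp hp.1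
        rw [Finset.mem_Icc]
        exact ⟨le_trans (by norm_num) (Nat.mul_le_mul hl.1 h1.1),
          Nat.mul_le_mul hl.2 h1.2⟩
      · intro x hx
        rw [Finset.mem_Icc] at hx
        have hDx : (P.filter (· ∣ x)).card ≤ n + k := by
          apply dcount N n k P hN2 hPmem x hx.1
          calc (x:ℝ) ≤ ((X:ℕ):ℝ) := Nat.cast_le.mpr hx.2
            _ = (L:ℝ) * ((Nf:ℕ):ℝ)^k := by rw [hXdef]; push_cast; ring
            _ ≤ N^n * N^k := by
                apply mul_le_mul hLN (pow_le_pow_left₀ (by positivity) hNfle k)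
                  (by positivity) (by positivity)
            _ = N^(n+k) := (pow_add N n k).symm
        calc ((Finset.Icc 1 L ×ˢ U).filter (fun p => p.1 * Pf p.2 = x)).card
            ≤ (Fintype.piFinset (fun i : Fin m => if i ∈ I then P.filter (· ∣ x) else {1})).card := by
              apply Finset.card_le_card_of_injOn (fun p => p.2)
              · intro p hp
                rw [Finset.mem_coe, Finset.mem_filter, Finset.mem_product] at hp
                rw [Finset.mem_coe, Fintype.mem_piFinset]
                intro i
                by_cases hi : i ∈ I
                · simp only [hi, if_true, Finset.mem_filter]
                  refine ⟨(hUmem p.2 hp.1.2).1 i hi, ?_⟩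
                  have hdv : p.2 i ∣ Pf p.2 := by
                    rw [hPfdef]
                    exact dvd_trans (dvd_pow_self (p.2 i) (hr i).ne')
                      (Finset.dvd_prod_of_mem _ (Finset.mem_univ i))
                  rw [← hp.2]
                  exact hdv.mul_left p.1
                · simp only [hi, if_false, Finset.mem_singleton]
                  exact (hUmem p.2 hp.1.2).2 i hi
              · intro p hp p' hp' hpp
                simp only [Finset.coe_filter, Finset.mem_product, Set.mem_setOf_eq] at hp hp'
                have h2 : p.2 = p'.2 := hpp
                have heq : p.1 * Pf p.2 = p'.1 * Pf p'.2 := by rw [hp.2, hp'.2]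
                rw [h2] at heq
                have hpos : 0 < Pf p'.2 := (hPfU p'.2 hp'.1.2).1
                exact Prod.ext (Nat.eq_of_mul_eq_mul_right hpos heq) h2
          _ = (P.filter (· ∣ x)).card ^ k * 1 ^ (m - k) := by
              rw [card_piFinset_ite, hIcard, Finset.card_singleton]
          _ ≤ (n+k)^k := by
              rw [one_pow, mul_one]
              exact Nat.pow_le_pow_left hDx k
    -- Step 4 (completion mod Q)
    have step4 : ∑ x ∈ Finset.Icc 1 X, (G x)^2
        ≤ ((X/Q + 1 : ℕ):ℝ) * ∑ c ∈ Finset.range Q, (G c)^2 := by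
      have hGmod : ∀ x : ℕ, G x = G (x % Q) := by
        intro x
        rw [hGdef]
        simp only []
        congr 1
        rw [hgCdef]
        simp only []
        apply Finset.sum_congr rfl
        intro v _
        have hxx : (x:ℝ) = ((x % Q : ℕ):ℝ) + ((Q:ℕ):ℝ) * ((x / Q : ℕ):ℝ) := by
          exact_mod_cast (Nat.mod_add_div x Q).symm
        have hexp : (x:ℝ) * ((Pf v : ℕ):ℝ) * (a:ℝ) / (q:ℝ)
            = ((x % Q : ℕ):ℝ) * ((Pf v : ℕ):ℝ) * (a:ℝ) / (q:ℝ)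
              + ((((x / Q : ℕ) : ℤ) * (((Pf v : ℕ)) : ℤ) * a) : ℤ) := by
          rw [hxx, hQR]
          have hq0' : (q:ℝ) ≠ 0 := ne_of_gt hqR
          simp only [Int.cast_mul, Int.cast_natCast]
          field_simp
        rw [hexp, e_add_int]
      rw [Finset.sum_congr rfl (fun x _ => by rw [hGmod x])]
      exact sum_le_of_fiber_le (Finset.Icc 1 X) (Finset.range Q) (fun x => x % Q)
        (fun c => (G c)^2) (fun c => by positivity)
        (fun x _ => Finset.mem_range.mpr (Nat.mod_lt x hQpos))
        (X/Q + 1) (fun c _ => count_mod_le X Q c hQpos)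
    -- Step 5 (orthogonality)
    have step5 : ∑ c ∈ Finset.range Q, (G c)^2
        = ((Q:ℕ):ℝ) * (((V ×ˢ V).filter (fun p => Pf p.2 % Q = Pf p.1 % Q)).card : ℝ) := by
      have hre : ∀ c : ℕ, ((G c)^2 : ℝ) = (gC c * (starRingEnd ℂ) (gC c)).re := by
        intro c
        rw [hGdef]
        simp only []
        rw [Complex.mul_conj, Complex.ofReal_re, Complex.normSq_eq_norm_sq]
      have hsum : ∑ c ∈ Finset.range Q, gC c * (starRingEnd ℂ) (gC c)
          = (((Q * ((V ×ˢ V).filter (fun p => Pf p.2 % Q = Pf p.1 % Q)).card : ℕ)):ℂ) := by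
        have hinner : ∀ c ∈ Finset.range Q, gC c * (starRingEnd ℂ) (gC c)
            = ∑ p ∈ V ×ˢ V,
              e ((c:ℝ) * ((((Pf p.1 : ℤ) - (Pf p.2 : ℤ)) * a : ℤ):ℝ) / ((Q:ℕ):ℝ)) := by
          intro c _
          rw [hgCdef]
          simp only []
          rw [map_sum, Finset.sum_mul_sum, ← Finset.sum_product']
          apply Finset.sum_congr rfl
          intro p _
          rw [e_mul_conj]
          congr 1
          rw [hQR]
          push_cast
          ring
        rw [Finset.sum_congr rfl hinner, Finset.sum_comm]
        have hpair : ∀ p ∈ V ×ˢ V,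
            ∑ c ∈ Finset.range Q,
              e ((c:ℝ) * ((((Pf p.1 : ℤ) - (Pf p.2 : ℤ)) * a : ℤ):ℝ) / ((Q:ℕ):ℝ))
            = if Pf p.2 % Q = Pf p.1 % Q then ((Q:ℕ):ℂ) else 0 := by
          intro p _
          by_cases hmod : Pf p.2 % Q = Pf p.1 % Q
          · rw [if_pos hmod]
            apply e_orth_dvd Q hQpos
            exact (Nat.modEq_iff_dvd.mp hmod).mul_right a
          · rw [if_neg hmod]
            apply e_orth_not Q hQpos
            intro hdvd
            apply hmod
            have hcop : Int.gcd ((Q:ℕ):ℤ) a = 1 := by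
              rw [hQZ, Int.gcd_comm]
              exact hgcd
            exact Nat.modEq_iff_dvd.mpr (Int.dvd_of_dvd_mul_left_of_gcd_one hdvd hcop)
        rw [Finset.sum_congr rfl hpair, Finset.sum_ite, Finset.sum_const, Finset.sum_const_zero,
          add_zero, nsmul_eq_mul]
        push_cast
        ring
      calc ∑ c ∈ Finset.range Q, (G c)^2
          = (∑ c ∈ Finset.range Q, gC c * (starRingEnd ℂ) (gC c)).re := by
            rw [Finset.sum_congr rfl (fun c _ => hre c), Complex.re_sum]
        _ = ((Q:ℕ):ℝ) * (((V ×ˢ V).filter (fun p => Pf p.2 % Q = Pf p.1 % Q)).card : ℝ) := by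
            rw [hsum, Complex.natCast_re]
            push_cast
            ring
    -- Step 6 (pair count)
    have step6 : ((((V ×ˢ V).filter (fun p => Pf p.2 % Q = Pf p.1 % Q)).card : ℕ):ℝ)
        ≤ ((P.card^(m-k) * ((n+k)^(m-k) * (Y/Q + 1)) : ℕ):ℝ) := by
      rw [Nat.cast_le]
      set W := (V ×ˢ V).filter (fun p => Pf p.2 % Q = Pf p.1 % Q) with hWdef
      have hfibV : ∀ (c : ℕ) (S : Finset (Fin m → ℕ)), S ⊆ V → (∀ v' ∈ S, Pf v' % Q = c) →
          S.card ≤ (n+k)^(m-k) * (Y/Q + 1) := by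
        intro c S hSV hSc
        have himg : S.image Pf ⊆ (Finset.Icc 1 Y).filter (fun w => w % Q = c) := by
          intro w hw
          obtain ⟨v0, hv0, rfl⟩ := Finset.mem_image.mp hw
          exact Finset.mem_filter.mpr ⟨Finset.mem_Icc.mpr
            ⟨(hPfV v0 (hSV hv0)).1, (hPfV v0 (hSV hv0)).2⟩, hSc v0 hv0⟩
        have h1 : S.card ≤ (n+k)^(m-k) * (S.image Pf).card := by
          apply Finset.card_le_mul_card_image
          intro w hw
          obtain ⟨v0, hv0, rfl⟩ := Finset.mem_image.mp hw
          have hDw : (P.filter (· ∣ Pf v0)).card ≤ n + k := by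
            apply dcount N n k P hN2 hPmem _ (hPfV v0 (hSV hv0)).1
            calc ((Pf v0 : ℕ):ℝ) ≤ ((Y:ℕ):ℝ) := Nat.cast_le.mpr (hPfV v0 (hSV hv0)).2
              _ = ((Nf:ℕ):ℝ)^(n-k) := by rw [hYdef]; push_cast; ring
              _ ≤ N^(n-k) := pow_le_pow_left₀ (by positivity) hNfle _
              _ ≤ N^(n+k) := pow_le_pow_right₀ hN1 (by omega)
          calc (S.filter (fun v' => Pf v' = Pf v0)).card
              ≤ (Fintype.piFinset (fun i : Fin m =>
                  if i ∈ I then ({1}:Finset ℕ) else P.filter (· ∣ Pf v0))).card := by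
                apply Finset.card_le_card_of_injOn (fun v' => v')
                · intro v' hv'
                  rw [Finset.mem_coe, Finset.mem_filter] at hv'
                  rw [Finset.mem_coe, Fintype.mem_piFinset]
                  intro i
                  by_cases hi : i ∈ I
                  · simp only [hi, if_true, Finset.mem_singleton]
                    exact (hVmem v' (hSV hv'.1)).1 i hi
                  · simp only [hi, if_false, Finset.mem_filter]
                    refine ⟨(hVmem v' (hSV hv'.1)).2 i hi, ?_⟩
                    rw [← hv'.2, hPfdef]
                    exact dvd_trans (dvd_pow_self (v' i) (hr i).ne')
                      (Finset.dvd_prod_of_mem _ (Finset.mem_univ i))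
                · intro x _ y _ hxy
                  exact hxy
            _ = 1^k * (P.filter (· ∣ Pf v0)).card ^ (m-k) := by
                rw [card_piFinset_ite, hIcard, Finset.card_singleton]
            _ ≤ (n+k)^(m-k) := by
                rw [one_pow, one_mul]
                exact Nat.pow_le_pow_left hDw _
        have h2 : (S.image Pf).card ≤ Y/Q + 1 :=
          le_trans (Finset.card_le_card himg) (count_mod_le Y Q c hQpos)
        calc S.card ≤ (n+k)^(m-k) * (S.image Pf).card := h1
          _ ≤ (n+k)^(m-k) * (Y/Q+1) := Nat.mul_le_mul_left _ h2
      have hfib2 : ∀ v ∈ W.image Prod.fst,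
          (W.filter (fun p => p.1 = v)).card ≤ (n+k)^(m-k) * (Y/Q+1) := by
        intro v _
        have hinj : (W.filter (fun p => p.1 = v)).card
            ≤ (V.filter (fun v' => Pf v' % Q = Pf v % Q)).card := by
          apply Finset.card_le_card_of_injOn Prod.snd
          · intro p hp
            rw [hWdef] at hp
            simp only [Finset.mem_coe, Finset.mem_filter, Finset.mem_product] at hp
            obtain ⟨⟨⟨hp1, hp2⟩, hmod⟩, hfst⟩ := hp
            rw [Finset.mem_coe, Finset.mem_filter]
            exact ⟨hp2, by rw [← hfst]; exact hmod⟩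
          · intro p hp p' hp' hpp
            simp only [Finset.coe_filter, Set.mem_setOf_eq] at hp hp'
            exact Prod.ext (hp.2.trans hp'.2.symm) hpp
        exact le_trans hinj (hfibV (Pf v % Q) _ (Finset.filter_subset _ _)
          (fun v' hv' => (Finset.mem_filter.mp hv').2))
      calc W.card
          ≤ ((n+k)^(m-k) * (Y/Q+1)) * (W.image Prod.fst).card :=
            Finset.card_le_mul_card_image _ _ hfib2
        _ ≤ ((n+k)^(m-k) * (Y/Q+1)) * V.card := by
            apply Nat.mul_le_mul_left
            apply Finset.card_le_card
            intro v hv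
            obtain ⟨p, hp, rfl⟩ := Finset.mem_image.mp hv
            rw [hWdef] at hp
            exact (Finset.mem_product.mp (Finset.mem_of_mem_filter _ hp)).1
        _ = P.card^(m-k) * ((n+k)^(m-k) * (Y/Q + 1)) := by
            rw [hVdef, card_piFinset_ite, hIcard, Finset.card_singleton, one_pow, one_mul]
            ring
    -- assemble
    have hm' : k + (m-k) = m := by omega
    have hn' : k + (n-k) = n := by omega
    have hXR : ((X:ℕ):ℝ) ≤ (L:ℝ) * N^k := by
      rw [hXdef]
      push_cast
      exact mul_le_mul_of_nonneg_left (pow_le_pow_left₀ (by positivity) hNfle k)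
        (Nat.cast_nonneg L)
    have hYR : ((Y:ℕ):ℝ) ≤ N^(n-k) := by
      rw [hYdef]
      push_cast
      exact pow_le_pow_left₀ (by positivity) hNfle _
    have f1 : ((X/Q + 1 : ℕ):ℝ) ≤ (((X:ℕ):ℝ) + (q:ℝ))/(q:ℝ) := by
      have h1 : ((X/Q : ℕ):ℝ) ≤ ((X:ℕ):ℝ)/((Q:ℕ):ℝ) := Nat.cast_div_le
      rw [hQR] at h1
      have h2 : (((X:ℕ):ℝ) + (q:ℝ))/(q:ℝ) = ((X:ℕ):ℝ)/(q:ℝ) + 1 := by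
        field_simp
      rw [h2]
      push_cast
      linarith
    have f2 : ((Y/Q + 1 : ℕ):ℝ) ≤ (((Y:ℕ):ℝ) + (q:ℝ))/(q:ℝ) := by
      have h1 : ((Y/Q : ℕ):ℝ) ≤ ((Y:ℕ):ℝ)/((Q:ℕ):ℝ) := Nat.cast_div_le
      rw [hQR] at h1
      have h2 : (((Y:ℕ):ℝ) + (q:ℝ))/(q:ℝ) = ((Y:ℕ):ℝ)/(q:ℝ) + 1 := by
        field_simp
      rw [h2]
      push_cast
      linarith
    -- combine the chain
    have hS3nn : (0:ℝ) ≤ ∑ x ∈ Finset.Icc 1 X, (G x)^2 :=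
      Finset.sum_nonneg (fun x _ => by positivity)
    have hS4nn : (0:ℝ) ≤ ∑ c ∈ Finset.range Q, (G c)^2 :=
      Finset.sum_nonneg (fun c _ => by positivity)
    have chain : (∑ p ∈ Finset.Icc 1 L ×ˢ U, G (p.1 * Pf p.2))^2
        ≤ ((L * P.card ^ k : ℕ):ℝ) * ((((n+k)^k : ℕ):ℝ) * (((X/Q + 1 : ℕ):ℝ) *
            (((Q:ℕ):ℝ) * ((P.card^(m-k) * ((n+k)^(m-k) * (Y/Q + 1)) : ℕ):ℝ)))) := by
      refine le_trans step2 (mul_le_mul_of_nonneg_left ?_ (Nat.cast_nonneg _))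
      refine le_trans step3 (mul_le_mul_of_nonneg_left ?_ (Nat.cast_nonneg _))
      refine le_trans step4 (mul_le_mul_of_nonneg_left ?_ (Nat.cast_nonneg _))
      rw [step5]
      exact mul_le_mul_of_nonneg_left step6 (Nat.cast_nonneg _)
    -- Mx^2 facts
    have hMa : (L:ℝ)^2 * N^(n+k) ≤ (max ((L : ℝ) * N ^ ((n : ℝ) / 2 + (k : ℝ) / 2))
        ((L : ℝ) * N ^ (n : ℕ) / Real.sqrt (q : ℝ)))^2 := by
      have h1 : (L:ℝ) * N ^ ((n : ℝ) / 2 + (k : ℝ) / 2) ≤ _ := le_max_left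
        ((L : ℝ) * N ^ ((n : ℝ) / 2 + (k : ℝ) / 2)) ((L : ℝ) * N ^ (n : ℕ) / Real.sqrt (q : ℝ))
      have h0 : (0:ℝ) ≤ (L:ℝ) * N ^ ((n : ℝ) / 2 + (k : ℝ) / 2) := by positivity
      have hNe : N ^ ((n : ℝ) / 2 + (k : ℝ) / 2) * N ^ ((n : ℝ) / 2 + (k : ℝ) / 2)
          = N^(n+k) := by
        rw [← Real.rpow_add hN0,
          show ((n : ℝ) / 2 + (k : ℝ) / 2) + ((n : ℝ) / 2 + (k : ℝ) / 2) = ((n+k : ℕ):ℝ) by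
            push_cast; ring,
          Real.rpow_natCast]
      have h2 : (L:ℝ)^2 * N^(n+k)
          = ((L:ℝ) * N ^ ((n : ℝ) / 2 + (k : ℝ) / 2)) * ((L:ℝ) * N ^ ((n : ℝ) / 2 + (k : ℝ) / 2)) := by
        rw [← hNe]; ring
      rw [h2, pow_two]
      exact mul_le_mul h1 h1 h0 hMx0
    have hMb : (L:ℝ)^2 * (N^(n:ℕ))^2 / (q:ℝ) ≤ (max ((L : ℝ) * N ^ ((n : ℝ) / 2 + (k : ℝ) / 2))
        ((L : ℝ) * N ^ (n : ℕ) / Real.sqrt (q : ℝ)))^2 := by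
      have h1 : (L:ℝ) * N ^ (n:ℕ) / Real.sqrt (q:ℝ) ≤ _ := le_max_right
        ((L : ℝ) * N ^ ((n : ℝ) / 2 + (k : ℝ) / 2)) ((L : ℝ) * N ^ (n : ℕ) / Real.sqrt (q : ℝ))
      have h0 : (0:ℝ) ≤ (L:ℝ) * N ^ (n:ℕ) / Real.sqrt (q:ℝ) := by positivity
      have h2 : ((L:ℝ) * N ^ (n:ℕ) / Real.sqrt (q:ℝ)) * ((L:ℝ) * N ^ (n:ℕ) / Real.sqrt (q:ℝ))
          = (L:ℝ)^2 * (N^(n:ℕ))^2 / (q:ℝ) := by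
        rw [div_mul_div_comm, Real.mul_self_sqrt hqR.le]
        ring
      rw [← h2, pow_two]
      exact mul_le_mul h1 h1 h0 hMx0
    -- the purely real estimate
    have hEbound : ((L * P.card ^ k : ℕ):ℝ) * ((((n+k)^k : ℕ):ℝ) * (((X/Q + 1 : ℕ):ℝ) *
            (((Q:ℕ):ℝ) * ((P.card^(m-k) * ((n+k)^(m-k) * (Y/Q + 1)) : ℕ):ℝ))))
        ≤ (4 * 2 ^ (n + k) * (n : ℝ) ^ (n : ℕ) *
            max ((L : ℝ) * N ^ ((n : ℝ) / 2 + (k : ℝ) / 2))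
              ((L : ℝ) * N ^ (n : ℕ) / Real.sqrt (q : ℝ)))^2 := by
      rw [hQR]
      push_cast
      have hpCk : (0:ℝ) ≤ ((P.card:ℕ):ℝ) := Nat.cast_nonneg _
      have ha1nn : (0:ℝ) ≤ ((X/Q : ℕ):ℝ) + 1 := by positivity
      have ha2nn : (0:ℝ) ≤ ((Y/Q : ℕ):ℝ) + 1 := by positivity
      push_cast at f1 f2
      -- middle product bound
      have hXq : ((X:ℕ):ℝ) + (q:ℝ) ≤ 2*((L:ℝ)*N^k) := by
        have h' := hXR
        linarith [hqLN]
      have hYq : ((Y:ℕ):ℝ) + (q:ℝ) ≤ N^(n-k) + (q:ℝ) := by linarith [hYR]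
      have hmid : (((X/Q : ℕ):ℝ) + 1) * ((q:ℝ) * (((Y/Q : ℕ):ℝ) + 1))
          ≤ 2*((L:ℝ)*N^(n:ℕ))/(q:ℝ) + 2*((L:ℝ)*N^k) := by
        calc (((X/Q : ℕ):ℝ) + 1) * ((q:ℝ) * (((Y/Q : ℕ):ℝ) + 1))
            ≤ ((((X:ℕ):ℝ) + (q:ℝ))/(q:ℝ)) * ((q:ℝ) * ((((Y:ℕ):ℝ) + (q:ℝ))/(q:ℝ))) := by
              apply mul_le_mul f1 (mul_le_mul_of_nonneg_left f2 hqR.le) (by positivity)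
                (by positivity)
          _ = (((X:ℕ):ℝ) + (q:ℝ)) * ((((Y:ℕ):ℝ) + (q:ℝ)))/(q:ℝ) := by
              field_simp
          _ ≤ (2*((L:ℝ)*N^k)) * ((N^(n-k) + (q:ℝ)))/(q:ℝ) := by
              apply (div_le_div_iff_of_pos_right hqR).mpr
              exact mul_le_mul hXq hYq (by positivity) (by positivity)
          _ = 2*((L:ℝ)*N^(n:ℕ))/(q:ℝ) + 2*((L:ℝ)*N^k) := by
              rw [show (2*((L:ℝ)*N^k)) * ((N^(n-k) + (q:ℝ)))
                  = 2*((L:ℝ)*(N^k*N^(n-k))) + (2*((L:ℝ)*N^k))*(q:ℝ) by ring,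
                ← pow_add N k (n-k), hn']
              field_simp
      -- the main nonneg bounds
      have hB1 : ((P.card:ℕ):ℝ)^k * ((P.card:ℕ):ℝ)^(m-k) = ((P.card:ℕ):ℝ)^m := by
        rw [← pow_add, hm']
      have hB2 : ((n:ℝ)+(k:ℝ))^k * ((n:ℝ)+(k:ℝ))^(m-k) = ((n:ℝ)+(k:ℝ))^m := by
        rw [← pow_add, hm']
      have hpm : ((P.card:ℕ):ℝ)^m ≤ N^(n:ℕ) :=
        le_trans (pow_le_pow_left₀ hpCk hpCN m) (pow_le_pow_right₀ hN1 hmn)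
      have hnkm : ((n:ℝ)+(k:ℝ))^m ≤ 2^n * (n:ℝ)^n := by
        have hkr : (k:ℝ) ≤ (n:ℝ) := by exact_mod_cast hkn.le
        have h2n1 : (1:ℝ) ≤ 2*(n:ℝ) := by
          have : (1:ℝ) ≤ (n:ℝ) := by exact_mod_cast hn
          linarith
        calc ((n:ℝ)+(k:ℝ))^m ≤ (2*(n:ℝ))^m :=
              pow_le_pow_left₀ (by positivity) (by linarith) m
          _ ≤ (2*(n:ℝ))^n := pow_le_pow_right₀ h2n1 hmn
          _ = 2^n * (n:ℝ)^n := mul_pow 2 _ n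
      -- final calc
      calc (L:ℝ) * ((P.card:ℕ):ℝ)^k * (((n:ℝ)+(k:ℝ))^k * ((((X/Q : ℕ):ℝ) + 1) *
              ((q:ℝ) * (((P.card:ℕ):ℝ)^(m-k) * (((n:ℝ)+(k:ℝ))^(m-k) * (((Y/Q : ℕ):ℝ) + 1))))))
          = ((L:ℝ) * (((P.card:ℕ):ℝ)^k * ((P.card:ℕ):ℝ)^(m-k))
              * (((n:ℝ)+(k:ℝ))^k * ((n:ℝ)+(k:ℝ))^(m-k)))
            * ((((X/Q : ℕ):ℝ) + 1) * ((q:ℝ) * (((Y/Q : ℕ):ℝ) + 1))) := by ring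
        _ = ((L:ℝ) * ((P.card:ℕ):ℝ)^m * ((n:ℝ)+(k:ℝ))^m)
            * ((((X/Q : ℕ):ℝ) + 1) * ((q:ℝ) * (((Y/Q : ℕ):ℝ) + 1))) := by rw [hB1, hB2]
        _ ≤ ((L:ℝ) * N^(n:ℕ) * (2^n * (n:ℝ)^n))
            * (2*((L:ℝ)*N^(n:ℕ))/(q:ℝ) + 2*((L:ℝ)*N^k)) := by
            apply mul_le_mul _ hmid (by positivity) (by positivity)
            apply mul_le_mul (mul_le_mul_of_nonneg_left hpm (Nat.cast_nonneg L)) hnkm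
              (by positivity) (by positivity)
        _ = 2^(n+1)*(n:ℝ)^n * ((L:ℝ)^2*(N^(n:ℕ))^2/(q:ℝ))
            + 2^(n+1)*(n:ℝ)^n * ((L:ℝ)^2*N^(n+k)) := by
            rw [pow_add N n k]
            field_simp
            ring
        _ ≤ 2^(n+1)*(n:ℝ)^n * (max ((L : ℝ) * N ^ ((n : ℝ) / 2 + (k : ℝ) / 2))
              ((L : ℝ) * N ^ (n : ℕ) / Real.sqrt (q : ℝ)))^2
            + 2^(n+1)*(n:ℝ)^n * (max ((L : ℝ) * N ^ ((n : ℝ) / 2 + (k : ℝ) / 2))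
              ((L : ℝ) * N ^ (n : ℕ) / Real.sqrt (q : ℝ)))^2 :=
            add_le_add (mul_le_mul_of_nonneg_left hMb (by positivity))
              (mul_le_mul_of_nonneg_left hMa (by positivity))
        _ ≤ (4 * 2 ^ (n + k) * (n : ℝ) ^ (n : ℕ) *
              max ((L : ℝ) * N ^ ((n : ℝ) / 2 + (k : ℝ) / 2))
                ((L : ℝ) * N ^ (n : ℕ) / Real.sqrt (q : ℝ)))^2 := by
            have hp1 : (2:ℝ)^(n+2) ≤ 16*((2:ℝ)^(n+k))^2 := by
              rw [← pow_mul]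
              calc (2:ℝ)^(n+2) ≤ (2:ℝ)^((n+k)*2) :=
                    pow_le_pow_right₀ one_le_two (by omega)
                _ ≤ 16 * (2:ℝ)^((n+k)*2) :=
                    le_mul_of_one_le_left (by positivity) (by norm_num)
            have hp2 : (n:ℝ)^n ≤ ((n:ℝ)^n)^2 := le_self_pow₀ hn1R two_ne_zero
            have hcore : (2:ℝ)^(n+2) * (n:ℝ)^n ≤ 16*((2:ℝ)^(n+k))^2 * ((n:ℝ)^n)^2 :=
              mul_le_mul hp1 hp2 (by positivity) (by positivity)
            calc 2^(n+1)*(n:ℝ)^n * _^2 + 2^(n+1)*(n:ℝ)^n * _^2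
                = ((2:ℝ)^(n+2) * (n:ℝ)^n) * (max ((L : ℝ) * N ^ ((n : ℝ) / 2 + (k : ℝ) / 2))
                    ((L : ℝ) * N ^ (n : ℕ) / Real.sqrt (q : ℝ)))^2 := by ring
              _ ≤ (16*((2:ℝ)^(n+k))^2 * ((n:ℝ)^n)^2) * (max ((L : ℝ) * N ^ ((n : ℝ) / 2 + (k : ℝ) / 2))
                    ((L : ℝ) * N ^ (n : ℕ) / Real.sqrt (q : ℝ)))^2 :=
                  mul_le_mul_of_nonneg_right hcore (sq_nonneg _)
              _ = _ := by ring
    have hfin2 : (∑ p ∈ Finset.Icc 1 L ×ˢ U, G (p.1 * Pf p.2))^2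
        ≤ (4 * 2 ^ (n + k) * (n : ℝ) ^ (n : ℕ) *
            max ((L : ℝ) * N ^ ((n : ℝ) / 2 + (k : ℝ) / 2))
              ((L : ℝ) * N ^ (n : ℕ) / Real.sqrt (q : ℝ)))^2 := le_trans chain hEbound
    refine le_trans step1 ?_
    refine le_of_pow_le_pow_left₀ two_ne_zero (by positivity) hfin2
end

section
/- Let n, k, L be positive integers and N ≥ 1 a real number with L ≤ N^n and 2^{n+k+1} < N, and let 𝒫 be a set of prime numbers contained in the interval [N/2, N]. Then for every positive integer r with r ≤ L·N^k, the number of tuples (l, q₁, …, q_k) with 1 ≤ l ≤ L an integer, q₁, …, q_k ∈ 𝒫, and l·q₁⋯q_k = r, is at most 2^{n+k+1}·k^k. -/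
open Finset

lemma aux_nk (n k : ℕ) (hn : 0 < n) (hk : 0 < k) :
    (n + k) ^ k ≤ 2 ^ (n + k + 1) * k ^ k := by
  set c := (n + k - 1) / k with hc
  have hd : k * c + (n + k - 1) % k = n + k - 1 := Nat.div_add_mod _ k
  have hm : (n + k - 1) % k < k := Nat.mod_lt _ hk
  have he : (c + 1) * k = k * c + k := by ring
  have he2 : c * k = k * c := by ring
  have hnck : n ≤ c * k := by omega
  have hstep : n + k ≤ (c + 1) * k := by omega
  calc (n + k) ^ k ≤ ((c + 1) * k) ^ k := Nat.pow_le_pow_left hstep k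
    _ = (c + 1) ^ k * k ^ k := by rw [mul_pow]
    _ ≤ (2 ^ c) ^ k * k ^ k := by
        gcongr
        exact Nat.lt_two_pow_self (n := c)
    _ = 2 ^ (c * k) * k ^ k := by rw [← pow_mul]
    _ ≤ 2 ^ (n + k + 1) * k ^ k := by
        gcongr
        · norm_num
        · omega

theorem stmt_10 (n k L : ℕ) (hn : 0 < n) (hk : 0 < k) (hL : 0 < L)
    (N : ℝ) (hN : 1 ≤ N) (hLN : (L : ℝ) ≤ N ^ (n : ℕ))
    (h2 : (2 : ℝ) ^ (n + k + 1) < N)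
    (P : Finset ℕ) (hP : ∀ p ∈ P, Nat.Prime p ∧ N / 2 ≤ (p : ℝ) ∧ (p : ℝ) ≤ N)
    (r : ℕ) (hr : 0 < r) (hrLN : (r : ℝ) ≤ (L : ℝ) * N ^ (k : ℕ)) :
    (((Finset.Icc 1 L) ×ˢ Fintype.piFinset fun _ : Fin k => P).filter
        (fun x => x.1 * ∏ i, x.2 i = r)).card ≤ 2 ^ (n + k + 1) * k ^ k := by
  set S : Finset ℕ := P.filter (fun p => p ∣ r) with hS
  -- card bound via injection on second component
  have hmem : ∀ x ∈ (((Finset.Icc 1 L) ×ˢ Fintype.piFinset fun _ : Fin k => P).filter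
        (fun x => x.1 * ∏ i, x.2 i = r)),
      x.2 ∈ Fintype.piFinset (fun _ : Fin k => S) := by
    intro x hx
    rw [mem_filter, mem_product] at hx
    obtain ⟨⟨hx1, hx2⟩, hxr⟩ := hx
    rw [Fintype.mem_piFinset] at hx2 ⊢
    intro i
    rw [hS, mem_filter]
    refine ⟨hx2 i, ?_⟩
    exact dvd_trans (Finset.dvd_prod_of_mem _ (mem_univ i)) ⟨x.1, by rw [← hxr]; ring⟩
  have hinj : Set.InjOn (Prod.snd : ℕ × (Fin k → ℕ) → Fin k → ℕ) ↑(((Finset.Icc 1 L) ×ˢ Fintype.piFinset fun _ : Fin k => P).filter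
        (fun x => x.1 * ∏ i, x.2 i = r)) := by
    intro x hx y hy hxy
    rw [Finset.mem_coe, mem_filter, mem_product] at hx hy
    have hp : (∏ i, x.2 i) ≠ 0 := by
      apply Finset.prod_ne_zero_iff.2
      intro i _
      exact (hP _ (Fintype.mem_piFinset.1 hx.1.2 i)).1.pos.ne'
    have : x.1 * ∏ i, x.2 i = y.1 * ∏ i, y.2 i := by rw [hx.2, hy.2]
    rw [hxy] at this
    have h1 : x.1 = y.1 := Nat.eq_of_mul_eq_mul_right (Nat.pos_of_ne_zero (hxy ▸ hp)) this
    exact Prod.ext h1 hxy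
  have hcard1 : (((Finset.Icc 1 L) ×ˢ Fintype.piFinset fun _ : Fin k => P).filter
        (fun x => x.1 * ∏ i, x.2 i = r)).card ≤ S.card ^ k := by
    calc _ ≤ (Fintype.piFinset (fun _ : Fin k => S)).card :=
          Finset.card_le_card_of_injOn _ hmem hinj
      _ = S.card ^ k := by simp [Fintype.card_piFinset]
  -- bound S.card ≤ n + k
  have hSprime : ∀ p ∈ S, Nat.Prime p := fun p hp => (hP p (mem_filter.1 hp).1).1
  have hSdvd : (∏ p ∈ S, p) ∣ r :=
    Finset.prod_primes_dvd r (fun p hp => (hSprime p hp).prime)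
      (fun p hp => (mem_filter.1 hp).2)
  have hrN : (r : ℝ) ≤ N ^ (n + k) := by
    calc (r : ℝ) ≤ (L : ℝ) * N ^ k := hrLN
      _ ≤ N ^ n * N ^ k := by gcongr
      _ = N ^ (n + k) := by rw [← pow_add]
  have hN2 : (1 : ℝ) ≤ N / 2 := by
    have : (2 : ℝ) ≤ 2 ^ (n + k + 1) := by
      calc (2:ℝ) = 2 ^ 1 := (pow_one 2).symm
        _ ≤ 2 ^ (n + k + 1) := pow_le_pow_right₀ one_le_two (by omega)
    linarith
  have hlow : (N / 2) ^ S.card ≤ (r : ℝ) := by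
    calc (N / 2) ^ S.card = ∏ _p ∈ S, (N / 2) := by rw [Finset.prod_const]
      _ ≤ ∏ p ∈ S, (p : ℝ) := by
          apply Finset.prod_le_prod (fun p _ => by linarith) 
          intro p hp
          exact (hP p (mem_filter.1 hp).1).2.1
      _ = ((∏ p ∈ S, p : ℕ) : ℝ) := by rw [Nat.cast_prod]
      _ ≤ (r : ℝ) := by exact_mod_cast Nat.le_of_dvd hr hSdvd
  have hScard : S.card ≤ n + k := by
    by_contra hcon
    push_neg at hcon
    have hm : n + k + 1 ≤ S.card := hcon
    have h3 : (N / 2) ^ (n + k + 1) ≤ (N / 2) ^ S.card := pow_le_pow_right₀ hN2 hm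
    have h4 : (N / 2) ^ (n + k + 1) ≤ N ^ (n + k) := le_trans h3 (le_trans hlow hrN)
    have h5 : N ^ (n + k + 1) ≤ 2 ^ (n + k + 1) * N ^ (n + k) := by
      have := mul_le_mul_of_nonneg_left h4 (by positivity : (0:ℝ) ≤ 2 ^ (n + k + 1))
      calc N ^ (n + k + 1) = 2 ^ (n + k + 1) * (N / 2) ^ (n + k + 1) := by
            rw [← mul_pow]; ring_nf
        _ ≤ 2 ^ (n + k + 1) * N ^ (n + k) := this
    have h6 : 2 ^ (n + k + 1) * N ^ (n + k) < N * N ^ (n + k) := by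
      gcongr
    rw [← pow_succ'] at h6
    linarith
  calc _ ≤ S.card ^ k := hcard1
    _ ≤ (n + k) ^ k := Nat.pow_le_pow_left hScard k
    _ ≤ 2 ^ (n + k + 1) * k ^ k := aux_nk n k hn hk
end
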